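/- Second-difference Hölder estimate for the polynomial weight (Lemma 3.10, labeled Le29): For every β ∈ (0,2] there is a constant C = C(β,d) > 0 such that for all x, y ∈ ℝ^d, | U_β(x+y) + U_β(x−y) − 2 U_β(x) | ≤ C |y|^β, where U_β(x) := (1 + |x|²)^{β/2}. -/

import Mathlib

open scoped ENNReal

noncomputable section

private lemma subadd_rpow {a b q : ℝ} (ha : 0 ≤ a) (hb : 0 ≤ b) (hq0 : 0 ≤ q) (hq1 : q ≤ 1) :
    (a + b) ^ q ≤ a ^ q + b ^ q := by
  have h := NNReal.rpow_add_le_add_rpow (a.toNNReal) (b.toNNReal) hq0 hq1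
  have h2 : (((a.toNNReal + b.toNNReal) ^ q : NNReal) : ℝ)
      ≤ ((a.toNNReal ^ q + b.toNNReal ^ q : NNReal) : ℝ) := by exact_mod_cast h
  rw [NNReal.coe_add, NNReal.coe_rpow, NNReal.coe_rpow, NNReal.coe_rpow, NNReal.coe_add,
    Real.coe_toNNReal _ ha, Real.coe_toNNReal _ hb] at h2
  exact h2

private lemma mvt2_bound {q w L : ℝ} (hq0 : 0 < q) (hq1 : q ≤ 1) (hL : 0 < L)
    (hwL : 1 ≤ w - L) :
    2 * w ^ q - (w - L) ^ q - (w + L) ^ q ≤ L ^ 2 * (w - L) ^ (q - 2) := by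
  have hwLpos : (0:ℝ) < w - L := lt_of_lt_of_le one_pos hwL
  -- first MVT on g t = (w+t)^q - (w+t-L)^q
  have hderiv1 : ∀ t ∈ Set.Ioo (0:ℝ) L,
      HasDerivAt (fun t => (w + t) ^ q - (w + t - L) ^ q)
        (q * (w + t) ^ (q - 1) - q * (w + t - L) ^ (q - 1)) t := by
    intro t ht
    have h1 : (0:ℝ) < w + t := by nlinarith [ht.1, ht.2]
    have h2 : (0:ℝ) < w + t - L := by nlinarith [ht.1, ht.2]
    have d1 : HasDerivAt (fun t : ℝ => w + t) 1 t := by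
      simpa using (hasDerivAt_id t).const_add w
    have d2 : HasDerivAt (fun t : ℝ => w + t - L) 1 t := d1.sub_const L
    have e1 := (Real.hasDerivAt_rpow_const (p := q) (Or.inl h1.ne')).comp t d1
    have e2 := (Real.hasDerivAt_rpow_const (p := q) (Or.inl h2.ne')).comp t d2
    simpa [mul_one, Function.comp_def, Pi.sub_def] using e1.sub e2
  have hcont1 : ContinuousOn (fun t => (w + t) ^ q - (w + t - L) ^ q) (Set.Icc 0 L) := by
    apply ContinuousOn.sub
    · apply ContinuousOn.rpow_const (by fun_prop)
      intro t ht
      left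
      nlinarith [ht.1, ht.2]
    · apply ContinuousOn.rpow_const (by fun_prop)
      intro t ht
      left
      nlinarith [ht.1, ht.2]
  obtain ⟨c, hc, hceq⟩ := exists_hasDerivAt_eq_slope _ _ hL hcont1 hderiv1
  -- second MVT on h t = (w+c-L+t)^(q-1)
  have hderiv2 : ∀ t ∈ Set.Ioo (0:ℝ) L,
      HasDerivAt (fun t => (w + c - L + t) ^ (q - 1))
        ((q - 1) * (w + c - L + t) ^ (q - 1 - 1)) t := by
    intro t ht
    have h1 : (0:ℝ) < w + c - L + t := by nlinarith [ht.1, ht.2, hc.1, hc.2]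
    have d1 : HasDerivAt (fun t : ℝ => w + c - L + t) 1 t := by
      simpa using (hasDerivAt_id t).const_add (w + c - L)
    have e1 := (Real.hasDerivAt_rpow_const (p := q - 1) (Or.inl h1.ne')).comp t d1
    simpa [mul_one, Function.comp_def] using e1
  have hcont2 : ContinuousOn (fun t => (w + c - L + t) ^ (q - 1)) (Set.Icc 0 L) := by
    apply ContinuousOn.rpow_const (by fun_prop)
    intro t ht
    left
    nlinarith [ht.1, ht.2, hc.1, hc.2]
  obtain ⟨c₂, hc₂, hceq2⟩ := exists_hasDerivAt_eq_slope _ _ hL hcont2 hderiv2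
  -- assemble
  set X := w + c - L + c₂ with hX
  have hXge : w - L ≤ X := by nlinarith [hc.1, hc₂.1]
  have hXpos : (0:ℝ) < X := lt_of_lt_of_le hwLpos hXge
  have hslope1 : q * (w + c) ^ (q - 1) - q * (w + c - L) ^ (q - 1)
      = ((w + L) ^ q + (w - L) ^ q - 2 * w ^ q) / L := by
    rw [hceq]; congr 1
    · ring_nf
    · ring
  have hslope2 : (q - 1) * X ^ (q - 1 - 1)
      = ((w + c) ^ (q - 1) - (w + c - L) ^ (q - 1)) / L := by
    rw [hceq2]; congr 1
    · ring_nf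
    · ring
  have key : 2 * w ^ q - (w - L) ^ q - (w + L) ^ q = q * (1 - q) * L ^ 2 * X ^ (q - 2) := by
    have h1 : (w + L) ^ q + (w - L) ^ q - 2 * w ^ q
        = L * (q * (w + c) ^ (q - 1) - q * (w + c - L) ^ (q - 1)) := by
      rw [hslope1]; field_simp
    have h2 : (w + c) ^ (q - 1) - (w + c - L) ^ (q - 1) = L * ((q - 1) * X ^ (q - 1 - 1)) := by
      rw [hslope2]; field_simp
    have : q - 1 - 1 = q - 2 := by ring
    rw [this] at h2
    linear_combination (-1 : ℝ) * h1 - L * q * h2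
  rw [key]
  have hXle : X ^ (q - 2) ≤ (w - L) ^ (q - 2) :=
    Real.rpow_le_rpow_of_nonpos hwLpos hXge (by linarith)
  have hXnn : (0:ℝ) ≤ X ^ (q - 2) := (Real.rpow_pos_of_pos hXpos _).le
  have hq1' : q * (1 - q) ≤ 1 := by nlinarith
  have hqnn : 0 ≤ q * (1 - q) := by nlinarith
  calc q * (1 - q) * L ^ 2 * X ^ (q - 2) ≤ 1 * L ^ 2 * X ^ (q - 2) := by
        apply mul_le_mul_of_nonneg_right _ hXnn
        apply mul_le_mul_of_nonneg_right hq1' (by positivity)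
      _ = L ^ 2 * X ^ (q - 2) := by ring
      _ ≤ L ^ 2 * (w - L) ^ (q - 2) := by
        apply mul_le_mul_of_nonneg_left hXle (by positivity)

private lemma upper_bound {q a s u v : ℝ} (hq0 : 0 < q) (hq1 : q ≤ 1) (ha : 0 ≤ a)
    (hu : 0 ≤ u) (hv : 0 ≤ v) (hsum : u + v = 2 * a + 2 * s ^ 2) :
    (1 + u) ^ q + (1 + v) ^ q - 2 * (1 + a) ^ q ≤ 2 * (s ^ 2) ^ q := by
  have hcc := Real.concaveOn_rpow hq0.le hq1
  have hmid := hcc.2 (Set.mem_Ici.mpr (by linarith : (0:ℝ) ≤ 1 + u))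
    (Set.mem_Ici.mpr (by linarith : (0:ℝ) ≤ 1 + v))
    (by norm_num : (0:ℝ) ≤ 1/2) (by norm_num : (0:ℝ) ≤ 1/2) (by norm_num)
  simp only [smul_eq_mul] at hmid
  have hmideq : (1:ℝ)/2 * (1 + u) + 1/2 * (1 + v) = (1 + a) + s ^ 2 := by linarith
  rw [hmideq] at hmid
  have hsub : ((1 + a) + s ^ 2) ^ q ≤ (1 + a) ^ q + (s ^ 2) ^ q :=
    subadd_rpow (by linarith) (by positivity) hq0.le hq1
  linarith

set_option maxHeartbeats 1000000 in
private lemma lower_bound {q r s p : ℝ} (hq0 : 0 < q) (hq1 : q ≤ 1) (hr : 0 ≤ r) (hs : 0 ≤ s)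
    (hp0 : 0 ≤ p) (hp : p ≤ r * s) :
    2 * (1 + r ^ 2) ^ q - (1 + (r ^ 2 + s ^ 2 - 2 * p)) ^ q
      - (1 + (r ^ 2 + s ^ 2 + 2 * p)) ^ q ≤ 16 * (s ^ 2) ^ q := by
  have hRHS : (0:ℝ) ≤ 16 * (s ^ 2) ^ q := by positivity
  rcases le_or_gt (2 * p) (s ^ 2) with hcase | hcase
  · -- both shifted points are ≥ a, so LHS ≤ 0
    have h1 : (1 + r ^ 2) ^ q ≤ (1 + (r ^ 2 + s ^ 2 - 2 * p)) ^ q :=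
      Real.rpow_le_rpow (by positivity) (by nlinarith) hq0.le
    have h2 : (1 + r ^ 2) ^ q ≤ (1 + (r ^ 2 + s ^ 2 + 2 * p)) ^ q :=
      Real.rpow_le_rpow (by positivity) (by nlinarith) hq0.le
    linarith
  · have hL : 0 < 2 * p - s ^ 2 := by linarith
    have hppos : 0 < p := by nlinarith [sq_nonneg s]
    have hrs : 0 < r * s := lt_of_lt_of_le hppos hp
    have hspos : 0 < s := by
      rcases hs.lt_or_eq with h | h
      · exact h
      · exfalso; rw [← h] at hrs; simp at hrs
    have hrpos : 0 < r := by
      rcases hr.lt_or_eq with h | h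
      · exact h
      · exfalso; rw [← h] at hrs; simp at hrs
    have hu : 0 ≤ r ^ 2 + s ^ 2 - 2 * p := by nlinarith [sq_nonneg (r - s)]
    obtain ⟨w, hw⟩ : ∃ w : ℝ, w = 1 + r ^ 2 := ⟨_, rfl⟩
    obtain ⟨L, hLdef⟩ : ∃ L : ℝ, L = 2 * p - s ^ 2 := ⟨_, rfl⟩
    rw [← hLdef] at hL
    have hwL : 1 ≤ w - L := by rw [hw, hLdef]; linarith
    have hwLpos : (0:ℝ) < w - L := by linarith
    have heq1 : 1 + (r ^ 2 + s ^ 2 - 2 * p) = w - L := by rw [hw, hLdef]; ring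
    have heq0 : 2 * (1 + r ^ 2) ^ q = 2 * w ^ q := by rw [hw]
    have hv' : (w + L) ^ q ≤ (1 + (r ^ 2 + s ^ 2 + 2 * p)) ^ q := by
      apply Real.rpow_le_rpow (by rw [hw, hLdef]; nlinarith) _ hq0.le
      rw [hw, hLdef]; nlinarith [sq_nonneg s]
    rw [heq1, heq0]
    -- reduce to the symmetric second difference ψ
    have hred : 2 * w ^ q - (w - L) ^ q - (1 + (r ^ 2 + s ^ 2 + 2 * p)) ^ q
        ≤ 2 * w ^ q - (w - L) ^ q - (w + L) ^ q := by linarith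
    -- bound 1 : ψ ≤ 2 L^q
    have hψ1 : 2 * w ^ q - (w - L) ^ q - (w + L) ^ q ≤ 2 * L ^ q := by
      have hb1 : w ^ q ≤ (w - L) ^ q + L ^ q := by
        have h := subadd_rpow (show (0:ℝ) ≤ w - L by linarith) hL.le hq0.le hq1
        have : (w - L) + L = w := by ring
        rwa [this] at h
      have hb2 : (w - L) ^ q ≤ (w + L) ^ q :=
        Real.rpow_le_rpow (by linarith) (by linarith) hq0.le
      linarith
    -- bound 2 : ψ ≤ L² (w-L)^(q-2)
    have hψ2 : 2 * w ^ q - (w - L) ^ q - (w + L) ^ q ≤ L ^ 2 * (w - L) ^ (q - 2) :=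
      mvt2_bound hq0 hq1 hL hwL
    rcases le_or_gt r (2 * s) with hcr | hcr
    · -- r ≤ 2s : use ψ ≤ 2 L^q ≤ 2 (4 s²)^q ≤ 8 (s²)^q
      have hL4 : L ≤ 4 * s ^ 2 := by rw [hLdef]; nlinarith
      have h1 : L ^ q ≤ (4 * s ^ 2) ^ q := Real.rpow_le_rpow hL.le hL4 hq0.le
      have h2 : ((4:ℝ) * s ^ 2) ^ q = 4 ^ q * (s ^ 2) ^ q :=
        Real.mul_rpow (by norm_num) (by positivity)
      have h3 : (4:ℝ) ^ q ≤ 4 := by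
        calc (4:ℝ) ^ q ≤ 4 ^ (1:ℝ) :=
              Real.rpow_le_rpow_of_exponent_le (by norm_num) hq1
          _ = 4 := Real.rpow_one 4
      have hsq : (0:ℝ) ≤ (s ^ 2) ^ q := by positivity
      have h4 : L ^ q ≤ 4 * (s ^ 2) ^ q := by
        rw [h2] at h1
        calc L ^ q ≤ 4 ^ q * (s ^ 2) ^ q := h1
          _ ≤ 4 * (s ^ 2) ^ q := mul_le_mul_of_nonneg_right h3 hsq
      linarith
    · -- 2s < r : use the second-derivative bound
      have hqtr : r ^ 2 / 4 ≤ w - L := by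
        rw [hw, hLdef]
        nlinarith [sq_nonneg (r - 2 * s), mul_pos hspos hspos]
      have hs2le : s ^ 2 ≤ w - L := by
        have : s ^ 2 ≤ r ^ 2 / 4 := by nlinarith
        linarith
      have hsplit : (w - L) ^ (q - 2) = (w - L) ^ (q - 1) * (w - L) ^ (-(1:ℝ)) := by
        rw [← Real.rpow_add hwLpos]; congr 1; ring
      have hb1 : (w - L) ^ (q - 1) ≤ (s ^ 2) ^ (q - 1) :=
        Real.rpow_le_rpow_of_nonpos (by positivity) hs2le (by linarith)
      have hb2 : (w - L) ^ (-(1:ℝ)) ≤ (r ^ 2 / 4) ^ (-(1:ℝ)) :=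
        Real.rpow_le_rpow_of_nonpos (by positivity) hqtr (by norm_num)
      have hb3 : L ^ 2 ≤ 4 * r ^ 2 * s ^ 2 := by
        have h1 : L ≤ 2 * (r * s) := by rw [hLdef]; linarith [sq_nonneg s, hp]
        have h2 : L ^ 2 ≤ (2 * (r * s)) ^ 2 := pow_le_pow_left₀ hL.le h1 2
        nlinarith [h2]
      have hn1 : (0:ℝ) ≤ (w - L) ^ (-(1:ℝ)) := (Real.rpow_pos_of_pos hwLpos _).le
      have hn2 : (0:ℝ) ≤ (s ^ 2) ^ (q - 1) := by positivity
      have hA : (w - L) ^ (q - 1) * (w - L) ^ (-(1:ℝ))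
          ≤ (s ^ 2) ^ (q - 1) * (r ^ 2 / 4) ^ (-(1:ℝ)) :=
        mul_le_mul hb1 hb2 hn1 hn2
      have hAnn : (0:ℝ) ≤ (s ^ 2) ^ (q - 1) * (r ^ 2 / 4) ^ (-(1:ℝ)) := by
        apply mul_nonneg hn2 (Real.rpow_pos_of_pos (by positivity) _).le
      have hfin : L ^ 2 * (w - L) ^ (q - 2)
          ≤ (4 * r ^ 2 * s ^ 2) * ((s ^ 2) ^ (q - 1) * (r ^ 2 / 4) ^ (-(1:ℝ))) := by
        rw [hsplit]
        exact mul_le_mul hb3 hA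
          (mul_nonneg (Real.rpow_pos_of_pos hwLpos _).le hn1) (by positivity)
      have hval : (4 * r ^ 2 * s ^ 2) * ((s ^ 2) ^ (q - 1) * (r ^ 2 / 4) ^ (-(1:ℝ)))
          = 16 * (s ^ 2) ^ q := by
        have hinv : (r ^ 2 / 4 : ℝ) ^ (-(1:ℝ)) = 4 / r ^ 2 := by
          rw [Real.rpow_neg_one]
          field_simp
        have hsq : (s:ℝ) ^ 2 * (s ^ 2) ^ (q - 1) = (s ^ 2) ^ q := by
          nth_rewrite 1 [← Real.rpow_one ((s:ℝ) ^ 2)]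
          rw [← Real.rpow_add (by positivity)]
          norm_num
        rw [hinv]
        calc (4 * r ^ 2 * s ^ 2) * ((s ^ 2) ^ (q - 1) * (4 / r ^ 2))
            = 16 * (s ^ 2 * (s ^ 2) ^ (q - 1)) := by
              field_simp; ring
          _ = 16 * (s ^ 2) ^ q := by rw [hsq]
      linarith [hfin, hψ2, hred, hval.le, hval.ge]

private lemma core_abs {q r s p : ℝ} (hq0 : 0 < q) (hq1 : q ≤ 1) (hr : 0 ≤ r) (hs : 0 ≤ s)
    (hp : |p| ≤ r * s) :
    |(1 + (r ^ 2 + s ^ 2 + 2 * p)) ^ q + (1 + (r ^ 2 + s ^ 2 - 2 * p)) ^ q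
      - 2 * (1 + r ^ 2) ^ q| ≤ 16 * (s ^ 2) ^ q := by
  obtain ⟨hp1, hp2⟩ := abs_le.mp hp
  rw [abs_le]
  constructor
  · -- lower bound
    rcases le_or_gt 0 p with hp0 | hp0
    · have h := lower_bound hq0 hq1 hr hs hp0 hp2
      linarith
    · have h := lower_bound hq0 hq1 hr hs (by linarith : (0:ℝ) ≤ -p) (by linarith)
      have e1 : r ^ 2 + s ^ 2 - 2 * -p = r ^ 2 + s ^ 2 + 2 * p := by ring
      have e2 : r ^ 2 + s ^ 2 + 2 * -p = r ^ 2 + s ^ 2 - 2 * p := by ring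
      rw [e1, e2] at h
      linarith
  · -- upper bound
    have hu : 0 ≤ r ^ 2 + s ^ 2 - 2 * p := by nlinarith [sq_nonneg (r - s)]
    have hv : 0 ≤ r ^ 2 + s ^ 2 + 2 * p := by nlinarith [sq_nonneg (r - s), hp1]
    have h := upper_bound (a := r ^ 2) (s := s) hq0 hq1 (by positivity) hu hv (by ring)
    have hRHS : (0:ℝ) ≤ (s ^ 2) ^ q := by positivity
    linarith

open scoped RealInnerProductSpace

/-- **Lemma 3.10 (Le29): second-difference Hölder estimate for the polynomial weight
`U_β(x) = (1+|x|²)^{β/2}`.** For every `β ∈ (0,2]` there is `C = C(β,d) > 0` such that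
`|U_β(x+y) + U_β(x−y) − 2U_β(x)| ≤ C |y|^β` for all `x, y ∈ ℝ^d`. -/
theorem polynomial_weight_second_difference
    (d : ℕ) (β : ℝ) (hβ : β ∈ Set.Ioc (0:ℝ) 2) :
    ∃ C > 0, ∀ x y : EuclideanSpace ℝ (Fin d),
      |(1 + ‖x + y‖ ^ 2) ^ (β / 2) + (1 + ‖x - y‖ ^ 2) ^ (β / 2)
          - 2 * (1 + ‖x‖ ^ 2) ^ (β / 2)| ≤ C * ‖y‖ ^ β := by
  obtain ⟨hβ0, hβ2⟩ := hβ
  refine ⟨16, by norm_num, fun x y => ?_⟩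
  have hq0 : 0 < β / 2 := by linarith
  have hq1 : β / 2 ≤ 1 := by linarith
  have key := core_abs (p := ⟪x, y⟫) hq0 hq1 (norm_nonneg x) (norm_nonneg y)
    (abs_real_inner_le_norm x y)
  rw [norm_add_sq_real, norm_sub_sq_real]
  have e1 : 1 + (‖x‖ ^ 2 + 2 * ⟪x, y⟫ + ‖y‖ ^ 2)
      = 1 + (‖x‖ ^ 2 + ‖y‖ ^ 2 + 2 * ⟪x, y⟫) := by ring
  have e2 : 1 + (‖x‖ ^ 2 - 2 * ⟪x, y⟫ + ‖y‖ ^ 2)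
      = 1 + (‖x‖ ^ 2 + ‖y‖ ^ 2 - 2 * ⟪x, y⟫) := by ring
  have e3 : ‖y‖ ^ β = (‖y‖ ^ 2) ^ (β / 2) := by
    rw [← Real.rpow_natCast ‖y‖ 2, ← Real.rpow_mul (norm_nonneg y)]
    congr 1
    push_cast
    ring
  rw [e1, e2, e3]
  exact key
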